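/- Every natural number N can be written as the sum of three terms of the sequence (⌊n²/8⌋)_{n∈ℕ}, i.e., there exist natural numbers A, B, C with N = ⌊A²/8⌋ + ⌊B²/8⌋ + ⌊C²/8⌋. -/

import Mathlib

private def F2 (a b c x y : ℤ) : ℤ := a*x^2 + 2*b*x*y + c*y^2

private lemma shiftb (a b : ℤ) (ha : 2 ≤ a) : ∃ q b', b = a*q + b' ∧ 4*b'^2 ≤ a^2 := by
  have h0 : 0 ≤ b % a := Int.emod_nonneg b (by omega)
  have h1 : b % a < a := Int.emod_lt_of_pos b (by omega)
  have hd : a * (b / a) + b % a = b := Int.mul_ediv_add_emod b a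
  by_cases h : 2*(b % a) ≤ a
  · exact ⟨b / a, b % a, by omega, by nlinarith⟩
  · exact ⟨b / a + 1, b % a - a, by ring_nf; omega, by nlinarith⟩

private lemma binA : ∀ a : ℕ, ∀ b c x y n : ℤ, 0 < (a:ℤ) → (a:ℤ)*c - b^2 = 1 →
    n = F2 a b c x y → ∃ u v : ℤ, n = u^2 + v^2 := by
  intro a
  induction a using Nat.strong_induction_on with
  | _ a IH =>
    intro b c x y n ha h1 hn
    unfold F2 at hn
    rcases eq_or_lt_of_le (show (1:ℤ) ≤ a by exact_mod_cast ha) with heq | hlt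
    · rw [← heq] at h1 hn
      exact ⟨x + b*y, y, by linear_combination hn + y^2*h1⟩
    · obtain ⟨q, b', hbq, hb'⟩ := shiftb a b (by exact_mod_cast hlt)
      have hb2 : b' = b - a*q := by linarith
      set c' : ℤ := c - 2*b*q + a*q^2 with hc'
      have h1' : c' * (a:ℤ) - b'^2 = 1 := by rw [hb2, hc']; linear_combination h1
      have hc'pos : 0 < c' := by nlinarith
      have hc'lt : c' < a := by nlinarith
      have hcast : ((c'.toNat : ℤ)) = c' := by omega
      apply IH c'.toNat (by omega) b' (a:ℤ) y (x + q*y) n (by omega)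
        (by rw [hcast]; linear_combination h1')
      unfold F2
      rw [hcast]
      linear_combination hn - y^2*hc' - 2*y*(x+q*y)*hb2

/-- positive binary form of determinant D has a primitive vector with small positive value -/
private lemma binB : ∀ a : ℕ, ∀ b c D : ℤ, 0 < (a:ℤ) → (a:ℤ)*c - b^2 = D → 0 < D →
    ∃ y z m : ℤ, IsCoprime y z ∧ m = F2 a b c y z ∧ 0 < m ∧ 3*m^2 ≤ 4*D := by
  intro a
  induction a using Nat.strong_induction_on with
  | _ a IH =>
    intro b c D ha hD hDpos
    by_cases h2 : (a:ℤ) = 1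
    · -- bound trivially: 3*1 ≤ 4D since D ≥ 1; m = a = 1
      exact ⟨1, 0, a, isCoprime_one_left, by unfold F2; ring, ha, by nlinarith⟩
    have hge2 : (2:ℤ) ≤ a := by
      have := ha; omega
    obtain ⟨q, b', hbq, hb'⟩ : ∃ q b', b = a*q + b' ∧ 4*b'^2 ≤ a^2 := by
      have h0 : 0 ≤ b % a := Int.emod_nonneg b (by omega)
      have h1 : b % a < a := Int.emod_lt_of_pos b (by omega)
      have hd : (a:ℤ) * (b / a) + b % a = b := Int.mul_ediv_add_emod b a
      by_cases h : 2*(b % a) ≤ a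
      · exact ⟨b / a, b % a, by omega, by nlinarith⟩
      · exact ⟨b / a + 1, b % a - a, by ring_nf; omega, by nlinarith⟩
    have hb2 : b' = b - a*q := by linarith
    set c' : ℤ := c - 2*b*q + a*q^2 with hc'
    have hD' : c' * (a:ℤ) - b'^2 = D := by rw [hb2, hc']; linear_combination hD
    have hc'pos : 0 < c' := by nlinarith
    by_cases hlt : c' < a
    · have hcast : ((c'.toNat : ℤ)) = c' := by omega
      obtain ⟨y, z, m, hcop, hm, hmpos, hmle⟩ :=
        IH c'.toNat (by omega) b' (a:ℤ) D (by omega) (by rw [hcast]; linear_combination hD') hDpos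
      refine ⟨z - q*y, y, m, ?_, ?_, hmpos, hmle⟩
      · -- coprimality: IsCoprime y z → IsCoprime (z - q*y) y
        obtain ⟨u, v, huv⟩ := hcop
        exact ⟨v, u + v*q, by linear_combination huv⟩
      · unfold F2 at hm ⊢
        rw [hcast] at hm
        linear_combination hm + y^2*hc' + 2*y*z*hb2
    · -- reduced: a itself is small
      push_neg at hlt
      refine ⟨1, 0, a, isCoprime_one_left, by unfold F2; ring, ha, ?_⟩
      -- a ≤ c', a*c' = D + b'^2, 4b'^2 ≤ a^2  ⇒ 3a^2 ≤ 4D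
      nlinarith

private def F3 (a b c d e g x y z : ℤ) : ℤ :=
  a*x^2 + b*y^2 + c*z^2 + 2*d*x*y + 2*e*x*z + 2*g*y*z

private def B3 (a b c d e g x y z x' y' z' : ℤ) : ℤ :=
  a*x*x' + b*y*y' + c*z*z' + d*(x*y'+y*x') + e*(x*z'+z*x') + g*(y*z'+z*y')

private def D3 (a b c d e g : ℤ) : ℤ :=
  a*b*c + 2*d*e*g - a*g^2 - b*e^2 - c*d^2

private lemma transform_val (a b c d e g p1 p2 p3 q1 q2 q3 r1 r2 r3 X Y Z : ℤ) :
    F3 a b c d e g (p1*X+q1*Y+r1*Z) (p2*X+q2*Y+r2*Z) (p3*X+q3*Y+r3*Z) =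
    F3 (F3 a b c d e g p1 p2 p3) (F3 a b c d e g q1 q2 q3) (F3 a b c d e g r1 r2 r3)
       (B3 a b c d e g p1 p2 p3 q1 q2 q3) (B3 a b c d e g p1 p2 p3 r1 r2 r3)
       (B3 a b c d e g q1 q2 q3 r1 r2 r3) X Y Z := by
  unfold F3 B3; ring

private lemma transform_det (a b c d e g p1 p2 p3 q1 q2 q3 r1 r2 r3 : ℤ) :
    D3 (F3 a b c d e g p1 p2 p3) (F3 a b c d e g q1 q2 q3) (F3 a b c d e g r1 r2 r3)
       (B3 a b c d e g p1 p2 p3 q1 q2 q3) (B3 a b c d e g p1 p2 p3 r1 r2 r3)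
       (B3 a b c d e g q1 q2 q3 r1 r2 r3) =
    D3 a b c d e g *
      (p1*(q2*r3-q3*r2) - q1*(p2*r3-p3*r2) + r1*(p2*q3-p3*q2))^2 := by
  unfold F3 B3 D3; ring

/-- every value of a positive definite integral ternary form of determinant 1
is a sum of three squares -/
private theorem tern : ∀ a : ℕ, ∀ b c d e g : ℤ,
    (∀ x y z : ℤ, ¬(x = 0 ∧ y = 0 ∧ z = 0) → 0 < F3 a b c d e g x y z) →
    D3 a b c d e g = 1 →
    ∀ n x y z : ℤ, n = F3 a b c d e g x y z → ∃ u v w : ℤ, n = u^2 + v^2 + w^2 := by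
  intro a
  induction a using Nat.strong_induction_on with
  | _ a IH =>
    intro b c d e g hpos hdet n x y z hn
    have ha : 0 < (a:ℤ) := by
      have := hpos 1 0 0 (by simp)
      unfold F3 at this; nlinarith [this]
    rcases eq_or_lt_of_le (show (1:ℤ) ≤ a by exact_mod_cast ha) with heq | ha2
    · -- a = 1 : complete the square and use binA
      rw [← heq] at hdet hn
      have hA1 : (0:ℤ) < b - d^2 := by
        have := hpos (-d) 1 0 (by simp)
        unfold F3 at this; rw [← heq] at this; nlinarith [this]
      have hcast : (((b - d^2).toNat : ℤ)) = b - d^2 := by omega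
      obtain ⟨u, v, huv⟩ := binA (b - d^2).toNat (g - d*e) (c - e^2) y z
        (n - (x + d*y + e*z)^2) (by omega)
        (by rw [hcast]; unfold D3 at hdet; linear_combination hdet)
        (by rw [hcast]; unfold F2; unfold F3 at hn; linear_combination hn)
      exact ⟨x + d*y + e*z, u, v, by linarith [huv]⟩
    · -- a ≥ 2 : find a smaller equivalent form
      -- the associated binary form a*(complement): coefficients
      obtain ⟨A, hA⟩ : ∃ t : ℤ, t = a*b - d^2 := ⟨_, rfl⟩
      have hApos : 0 < A := by
        have h := hpos (-d) a 0 (by simp; omega)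
        unfold F3 at h
        rw [hA]; nlinarith [h]
      have hAdet : A * ((a:ℤ)*c - e^2) - ((a:ℤ)*g - d*e)^2 = (a:ℤ) * 1 := by
        rw [hA, ← hdet]; unfold D3; ring
      have hcastA : ((A.toNat : ℤ)) = A := by omega
      obtain ⟨y0, z0, m, hcop, hm, hmpos, hmle⟩ := binB A.toNat ((a:ℤ)*g - d*e) ((a:ℤ)*c - e^2)
        (a:ℤ) (by omega) (by rw [hcastA]; linear_combination hAdet) ha
      rw [hcastA] at hm
      unfold F2 at hm
      -- choose x0 with |2*(a*x0 + d*y0 + e*z0)| ≤ a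
      obtain ⟨x0, s, hs, hs2⟩ : ∃ x0 s : ℤ, (a:ℤ)*x0 + d*y0 + e*z0 = s ∧ 4*s^2 ≤ (a:ℤ)^2 := by
        set t : ℤ := d*y0 + e*z0 with ht
        have h0 : 0 ≤ t % a := Int.emod_nonneg t (by omega)
        have h1 : t % a < a := Int.emod_lt_of_pos t (by omega)
        have hd2 : (a:ℤ) * (t / a) + t % a = t := Int.mul_ediv_add_emod t a
        by_cases h : 2*(t % a) ≤ a
        · exact ⟨-(t / a), t % a, by linarith, by nlinarith⟩
        · exact ⟨-(t / a) - 1, t % a - a, by ring_nf; linarith [hd2], by nlinarith⟩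
      -- the value a' = F3(x0,y0,z0) satisfies 0 < a' < a
      obtain ⟨a', ha'⟩ : ∃ t : ℤ, t = F3 (a:ℤ) b c d e g x0 y0 z0 := ⟨_, rfl⟩
      have key : (a:ℤ) * a' = s^2 + m := by
        rw [ha']; unfold F3
        linear_combination ((a:ℤ)*x0 + d*y0 + e*z0 + s)*hs - hm - y0^2*hA
      have hax : 0 < (a:ℤ)*a' := by linarith [key, hmpos, sq_nonneg s]
      have ha'pos : 0 < a' := by
        rcases mul_pos_iff.mp hax with ⟨_, h⟩ | ⟨h, _⟩
        · exact h
        · linarith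
      have hma : m ≤ (a:ℤ) := by
        by_contra hc
        push_neg at hc
        linarith [hmle, hmpos, sq_nonneg (m - 1), hc]
      have h4 : 4*((a:ℤ)*a') ≤ (a:ℤ)^2 + 4*(a:ℤ) := by linarith [key, hs2, hma]
      have ha'lt : a' < a := by
        by_contra hc
        push_neg at hc
        have h5 : (a:ℤ)*(a:ℤ) ≤ (a:ℤ)*a' := mul_le_mul_of_nonneg_left hc ha.le
        have h6 : (2:ℤ)*(a:ℤ) ≤ (a:ℤ)*(a:ℤ) := by
          have : (2:ℤ) ≤ (a:ℤ) := by linarith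
          exact mul_le_mul_of_nonneg_right this ha.le
        have e : ((a:ℤ))^2 = (a:ℤ)*(a:ℤ) := pow_two _
        linarith [h4, h5, h6, e.ge, e.le]
      obtain ⟨u, v, huv⟩ := hcop
      -- change of basis with columns (x0,y0,z0), (0,-v,u), (1,0,0)
      have hdet2 := transform_det (a:ℤ) b c d e g x0 y0 z0 0 (-v) u 1 0 0
      have hsq1 : (x0*((-v)*0-u*0) - 0*(y0*0-z0*0) + 1*(y0*u-z0*(-v))) = 1 := by
        linear_combination huv
      rw [hsq1, hdet, one_mul, one_pow] at hdet2
      have hpos2 : ∀ X Y Z : ℤ, ¬(X = 0 ∧ Y = 0 ∧ Z = 0) →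
          0 < F3 (F3 (a:ℤ) b c d e g x0 y0 z0) (F3 (a:ℤ) b c d e g 0 (-v) u)
            (F3 (a:ℤ) b c d e g 1 0 0)
            (B3 (a:ℤ) b c d e g x0 y0 z0 0 (-v) u) (B3 (a:ℤ) b c d e g x0 y0 z0 1 0 0)
            (B3 (a:ℤ) b c d e g 0 (-v) u 1 0 0) X Y Z := by
        intro X Y Z hXYZ
        rw [← transform_val]
        apply hpos
        rintro ⟨hI1, hI2, hI3⟩
        have hX : X = 0 := by linear_combination u*hI2 + v*hI3 - X*huv
        have hY : Y = 0 := by linear_combination y0*hI3 - z0*hI2 - Y*huv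
        have hZ : Z = 0 := by linear_combination hI1 - x0*hX
        exact hXYZ ⟨hX, hY, hZ⟩
      have hval2 : n = F3 (F3 (a:ℤ) b c d e g x0 y0 z0) (F3 (a:ℤ) b c d e g 0 (-v) u)
            (F3 (a:ℤ) b c d e g 1 0 0)
            (B3 (a:ℤ) b c d e g x0 y0 z0 0 (-v) u) (B3 (a:ℤ) b c d e g x0 y0 z0 1 0 0)
            (B3 (a:ℤ) b c d e g 0 (-v) u 1 0 0) (u*y + v*z) (y0*z - z0*y) (x - x0*(u*y + v*z)) := by
        rw [← transform_val]
        rw [hn]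
        have e1 : x0*(u*y + v*z) + 0*(y0*z - z0*y) + 1*(x - x0*(u*y + v*z)) = x := by ring
        have e2 : y0*(u*y + v*z) + (-v)*(y0*z - z0*y) + 0*(x - x0*(u*y + v*z)) = y := by
          linear_combination y*huv
        have e3 : z0*(u*y + v*z) + u*(y0*z - z0*y) + 0*(x - x0*(u*y + v*z)) = z := by
          linear_combination z*huv
        rw [e1, e2, e3]
      have hcast' : ((a'.toNat : ℤ)) = a' := by omega
      have hfa : F3 (a:ℤ) b c d e g x0 y0 z0 = ((a'.toNat : ℤ)) := by rw [hcast', ha']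
      rw [hfa] at hdet2 hpos2 hval2
      exact IH a'.toNat (by omega) _ _ _ _ _ hpos2 hdet2 n _ _ _ hval2

open NumberTheorySymbols ZMod in
private theorem threesq (m : ℕ) (hm4 : m % 4 = 3) :
    ∃ x y z : ℤ, (2*m : ℤ) = x^2 + y^2 + z^2 := by
  have hm2 : m % 2 = 1 := by omega
  have hmpos : 0 < m := by omega
  have hodd : Odd m := Nat.odd_iff.mpr hm2
  have h2m : Nat.Coprime 2 m := (Nat.Prime.coprime_iff_not_dvd Nat.prime_two).mpr (by omega)
  have hcop : Nat.Coprime 8 m := by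
    have := Nat.Coprime.pow_left 3 h2m
    norm_num at this
    exact this
  haveI : NeZero (8*m) := ⟨by omega⟩
  set e := ZMod.chineseRemainder hcop with he
  -- the target residue class
  have hunit5 : IsUnit ((5 : ZMod 8), (-1 : ZMod m)) := by
    apply IsUnit.of_mul_eq_one ((5 : ZMod 8), (-1 : ZMod m))
    rw [Prod.mk_mul_mk, show (5:ZMod 8)*5 = 1 from by decide,
      show (-1 : ZMod m)*(-1) = 1 from by ring]
    rfl
  have hunit : IsUnit (e.symm ((5 : ZMod 8), (-1 : ZMod m))) :=
    hunit5.map e.symm.toRingHom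
  obtain ⟨p, hpgt, hp, hpmod⟩ := Nat.forall_exists_prime_gt_and_eq_mod hunit (8*m)
  haveI : Fact p.Prime := ⟨hp⟩
  have hpe : ((p:ℕ) : ZMod 8 × ZMod m) = ((5 : ZMod 8), (-1 : ZMod m)) := by
    have h1 : e ((p : ZMod (8*m))) = e (e.symm ((5 : ZMod 8), (-1 : ZMod m))) := by
      rw [hpmod]
    rw [RingEquiv.apply_symm_apply] at h1
    exact (map_natCast e p).symm.trans h1
  have hp8 : p % 8 = 5 := by
    have h1 : (p : ZMod 8) = ((5:ℕ) : ZMod 8) := by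
      have := congrArg Prod.fst hpe
      simpa using this
    have h2 := (ZMod.natCast_eq_natCast_iff _ _ _).mp h1
    simp [Nat.ModEq] at h2
    omega
  have hpm1 : m ∣ p + 1 := by
    have h1 : (p : ZMod m) = -1 := by
      have := congrArg Prod.snd hpe; simpa using this
    have h2 : ((p + 1 : ℕ) : ZMod m) = 0 := by push_cast [h1]; ring
    exact (ZMod.natCast_eq_zero_iff _ _).mp h2
  have hdvd : 2*m ∣ p + 1 := Nat.Coprime.mul_dvd_of_dvd_of_dvd h2m (by omega) hpm1
  obtain ⟨Dn, hDn⟩ := hdvd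
  have hDnpos : 0 < Dn := by
    rcases Nat.eq_zero_or_pos Dn with h | h
    · rw [h, Nat.mul_zero] at hDn; omega
    · exact h
  -- integer versions
  have hDnz : (p:ℤ) + 1 = 2*(m:ℤ)*(Dn:ℤ) := by exact_mod_cast hDn
  have hpodd : Odd p := Nat.odd_iff.mpr (by omega)
  -- Jacobi symbol computations
  have hme : ((p:ℤ)) % (m:ℕ) = (-1) % (m:ℕ) := by
    have h1 : ((m:ℕ):ℤ) ∣ (-1) - (p:ℤ) := by
      have h0 : ((m:ℕ):ℤ) ∣ ((p:ℤ) + 1) := by exact_mod_cast Int.natCast_dvd_natCast.mpr hpm1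
      have h2 := dvd_neg.mpr h0
      convert h2 using 1
      · rfl
      · ring
    exact Int.modEq_iff_dvd.mpr h1
  have hJm : J((m:ℤ) | p) = -1 := by
    have h1 : J((p:ℤ) | m) = J((-1 : ℤ) | m) := jacobiSym.mod_left' hme
    have h2 := jacobiSym.quadratic_reciprocity_one_mod_four (a := p) (b := m) (by omega) hodd
    rw [h2.symm, h1, jacobiSym.at_neg_one hodd, ZMod.χ₄_nat_three_mod_four hm4]
  have hJ2 : J((-2:ℤ) | p) = -1 := by
    rw [jacobiSym.at_neg_two hpodd, ZMod.χ₈'_nat_eq_if_mod_eight]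
    rw [hp8]
    norm_num
    omega
  have hL2m : legendreSym p (-(2*(m:ℤ))) = 1 := by
    rw [jacobiSym.legendreSym.to_jacobiSym, show (-(2*(m:ℤ))) = (-2)*(m:ℤ) from by ring,
      jacobiSym.mul_left, hJ2, hJm]
    norm_num
  have hL1 : legendreSym p 1 = 1 := by
    have hne : ((1:ℤ) : ZMod p) ≠ 0 := by
      simp
    exact (legendreSym.eq_one_iff p hne).mpr ⟨1, by norm_num⟩
  have hstep : legendreSym p (-(Dn:ℤ)) * legendreSym p (-(2*(m:ℤ))) = 1 := by
    rw [← legendreSym.mul]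
    rw [show ((-(Dn:ℤ))*(-(2*(m:ℤ)))) = (p:ℤ)+1 from by linarith [hDnz]]
    have hmod : ((p:ℤ)+1) % p = 1 % p := by
      have := Int.add_mul_emod_self_left (a := 1) (b := (p:ℤ)) (c := 1)
      rw [mul_one] at this
      rw [add_comm] at this
      exact this
    rw [legendreSym.mod, hmod, ← legendreSym.mod]
    exact hL1
  have hLD : legendreSym p (-(Dn:ℤ)) = 1 := by
    rw [hL2m, mul_one] at hstep
    exact hstep
  have hne : (((-(Dn:ℤ)) : ℤ) : ZMod p) ≠ 0 := by
    intro h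
    have h1 : (p:ℤ) ∣ (-(Dn:ℤ)) := (ZMod.intCast_zmod_eq_zero_iff_dvd _ _).mp (by push_cast at h ⊢; exact h)
    have h2 : (p:ℤ) ∣ (Dn:ℤ) := (dvd_neg.mp h1)
    have h3 : (p:ℤ) ∣ (p:ℤ) + 1 := by
      rw [hDnz]
      exact Dvd.dvd.mul_left h2 _
    have h4 : (p:ℤ) ∣ 1 := (dvd_add_right (dvd_refl _)).mp h3
    have := Int.le_of_dvd one_pos h4
    have := hp.two_le
    omega
  haveI : NeZero p := ⟨hp.pos.ne'⟩
  obtain ⟨t, ht⟩ := (legendreSym.eq_one_iff p hne).mp hLD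
  have htv : ((t.val : ℕ) : ZMod p) = t := ZMod.natCast_rightInverse t
  have hbb : (p:ℤ) ∣ ((t.val:ℤ))^2 + (Dn:ℤ) := by
    apply (ZMod.intCast_zmod_eq_zero_iff_dvd _ _).mp
    push_cast
    rw [htv, pow_two, ← ht]
    push_cast
    ring
  obtain ⟨cc, hcc⟩ := hbb
  set bb : ℤ := (t.val : ℤ) with hbbdef
  -- the ternary form (p, cc, 2m; bb, 0, 1)
  have hdet : D3 (p:ℕ) cc (2*(m:ℤ)) bb 0 1 = 1 := by
    unfold D3
    linear_combination (-2)*(m:ℤ)*hcc - hDnz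
  have hpz : (0:ℤ) < p := by exact_mod_cast hp.pos
  have hDz : (0:ℤ) < Dn := by exact_mod_cast hDnpos
  have hpos : ∀ x y z : ℤ, ¬(x = 0 ∧ y = 0 ∧ z = 0) → 0 < F3 (p:ℕ) cc (2*(m:ℤ)) bb 0 1 x y z := by
    intro x y z hxyz
    have hid : (Dn:ℤ)*(p:ℤ)*(F3 (p:ℕ) cc (2*(m:ℤ)) bb 0 1 x y z) =
        (Dn:ℤ)*((p:ℤ)*x+bb*y)^2 + ((Dn:ℤ)*y+(p:ℤ)*z)^2 + ((2*(m:ℤ)*(Dn:ℤ) - (p:ℤ)))*(p:ℤ)*z^2 := by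
      unfold F3
      linear_combination (-(Dn:ℤ))*y^2*hcc
    rw [show (2*(m:ℤ)*(Dn:ℤ) - (p:ℤ)) = 1 from by linarith [hDnz]] at hid
    have hsum : 0 < (Dn:ℤ)*((p:ℤ)*x+bb*y)^2 + ((Dn:ℤ)*y+(p:ℤ)*z)^2 + 1*(p:ℤ)*z^2 := by
      rcases eq_or_ne z 0 with hz | hz
      · subst hz
        rcases eq_or_ne y 0 with hy | hy
        · subst hy
          have hx : x ≠ 0 := by tauto
          have h1 : (p:ℤ)*x + bb*0 ≠ 0 := by
            simp only [mul_zero, add_zero]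
            exact mul_ne_zero hpz.ne' hx
          have h2 : 0 < (Dn:ℤ)*((p:ℤ)*x+bb*0)^2 := mul_pos hDz (pow_two_pos_of_ne_zero h1)
          have h3 : (0:ℤ) ≤ ((Dn:ℤ)*0+(p:ℤ)*0)^2 := sq_nonneg _
          have h4 : (1:ℤ)*(p:ℤ)*(0:ℤ)^2 = 0 := by ring
          linarith [h2, h3, h4]
        · have h1 : (Dn:ℤ)*y + (p:ℤ)*0 ≠ 0 := by
            simp only [mul_zero, add_zero]
            exact mul_ne_zero hDz.ne' hy
          have h2 : 0 < ((Dn:ℤ)*y+(p:ℤ)*0)^2 := pow_two_pos_of_ne_zero h1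
          have h3 : (0:ℤ) ≤ (Dn:ℤ)*((p:ℤ)*x+bb*y)^2 := mul_nonneg hDz.le (sq_nonneg _)
          have h4 : (1:ℤ)*(p:ℤ)*(0:ℤ)^2 = 0 := by ring
          linarith [h2, h3, h4]
      · have h2 : 0 < (1:ℤ)*(p:ℤ)*z^2 := by
          have := pow_two_pos_of_ne_zero hz
          have := mul_pos hpz this
          linarith [this]
        have h3 : (0:ℤ) ≤ (Dn:ℤ)*((p:ℤ)*x+bb*y)^2 := mul_nonneg hDz.le (sq_nonneg _)
        have h4 : (0:ℤ) ≤ ((Dn:ℤ)*y+(p:ℤ)*z)^2 := sq_nonneg _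
        linarith [h2, h3, h4]
    have h0 : 0 < ((Dn:ℤ)*(p:ℤ)) * (F3 (p:ℕ) cc (2*(m:ℤ)) bb 0 1 x y z) := by
      rw [mul_assoc] at hid ⊢
      rw [hid]
      linarith [hsum]
    rcases mul_pos_iff.mp h0 with ⟨_, h⟩ | ⟨h, _⟩
    · exact h
    · exfalso
      have : 0 < (Dn:ℤ)*(p:ℤ) := mul_pos hDz hpz
      linarith
  have hval : (2*(m:ℤ)) = F3 (p:ℕ) cc (2*(m:ℤ)) bb 0 1 0 0 1 := by
    unfold F3; ring
  exact tern p cc (2*(m:ℤ)) bb 0 1 hpos hdet (2*(m:ℤ)) 0 0 1 hval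

private lemma sqmod8 (A : ℕ) : A^2 % 8 = 0 ∨ A^2 % 8 = 1 ∨ A^2 % 8 = 4 := by
  have h2 := Nat.pow_mod A 2 8
  rcases (show A % 8 = 0 ∨ A % 8 = 1 ∨ A % 8 = 2 ∨ A % 8 = 3 ∨ A % 8 = 4 ∨ A % 8 = 5 ∨
      A % 8 = 6 ∨ A % 8 = 7 by omega) with h | h | h | h | h | h | h | h <;>
    rw [h] at h2 <;> norm_num at h2 <;> omega

theorem stmt_3 (N : ℕ) :
    ∃ A B C : ℕ, N = A ^ 2 / 8 + B ^ 2 / 8 + C ^ 2 / 8 := by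
  obtain ⟨x, y, z, hxyz⟩ := threesq (4*N+3) (by omega)
  refine ⟨x.natAbs, y.natAbs, z.natAbs, ?_⟩
  have key : x.natAbs^2 + y.natAbs^2 + z.natAbs^2 = 8*N+6 := by
    have h1 : ((x.natAbs^2 + y.natAbs^2 + z.natAbs^2 : ℕ) : ℤ) = 8*(N:ℤ)+6 := by
      push_cast [Int.natCast_natAbs]
      rw [sq_abs, sq_abs, sq_abs]
      push_cast at hxyz
      linarith [hxyz]
    exact_mod_cast h1
  have r1 := sqmod8 x.natAbs
  have r2 := sqmod8 y.natAbs
  have r3 := sqmod8 z.natAbs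
  have d1 := Nat.div_add_mod (x.natAbs^2) 8
  have d2 := Nat.div_add_mod (y.natAbs^2) 8
  have d3 := Nat.div_add_mod (z.natAbs^2) 8
  omega
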